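/- With e₃ as in the classical formula on the rectangle λ₁ < Y < λ₂ < X < λ₃, each component of e₃ satisfies the Euler equation ∂²e₃/∂X∂Y + (1/2)/(X-Y)·∂e₃/∂X - (1/2)/(X-Y)·∂e₃/∂Y = 0. -/

import Mathlib

lemma aux_linear_hasDerivAt (c a x : ℝ) :
    HasDerivAt (fun t => c * (t - a)) c x := by
  simpa using ((hasDerivAt_id x).sub_const a).const_mul c

lemma aux_sqrt_hasDerivAt (c a x : ℝ) (h : 0 < c * (x - a)) :
    HasDerivAt (fun t => Real.sqrt (c * (t - a))) (c / (2 * Real.sqrt (c * (x - a)))) x :=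
  (aux_linear_hasDerivAt c a x).sqrt h.ne'

lemma aux_derivX (a p X c : ℝ) (hp : 0 < p * (X - a)) :
    deriv (fun X' => Real.sqrt ((p * (X' - a)) * c)) X
      = p / (2 * Real.sqrt (p * (X - a))) * Real.sqrt c := by
  have hcont : ContinuousAt (fun X' => p * (X' - a)) X := by fun_prop
  have hev : (fun X' => Real.sqrt ((p * (X' - a)) * c))
      =ᶠ[nhds X] fun X' => Real.sqrt (p * (X' - a)) * Real.sqrt c := by
    filter_upwards [hcont.eventually (eventually_gt_nhds hp)] with X' hX'
    exact Real.sqrt_mul hX'.le c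
  rw [hev.deriv_eq]
  exact ((aux_sqrt_hasDerivAt p a X hp).mul_const _).deriv

lemma aux_derivY (a q Y C : ℝ) (hC : 0 < C) (hq : 0 < q * (Y - a)) :
    deriv (fun Y' => Real.sqrt (C * (q * (Y' - a)))) Y
      = C * q / (2 * (Real.sqrt C * Real.sqrt (q * (Y - a)))) := by
  have h1 : HasDerivAt (fun Y' => C * (q * (Y' - a))) (C * q) Y := by
    simpa [mul_assoc] using aux_linear_hasDerivAt (C * q) a Y
  have h2 := (h1.sqrt (mul_pos hC hq).ne').deriv
  rw [h2, Real.sqrt_mul hC.le]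

lemma key (a p q X Y : ℝ) (hp : 0 < p * (X - a)) (hq : 0 < q * (Y - a)) (hXY : Y < X) :
    deriv (fun Y' => deriv (fun X' => Real.sqrt ((p * (X' - a)) * (q * (Y' - a)))) X) Y
      + ((1 : ℝ)/2)/(X - Y) * deriv (fun X' => Real.sqrt ((p * (X' - a)) * (q * (Y - a)))) X
      - ((1 : ℝ)/2)/(X - Y) * deriv (fun Y' => Real.sqrt ((p * (X - a)) * (q * (Y' - a)))) Y
      = 0 := by
  have hs1 : 0 < Real.sqrt (p * (X - a)) := Real.sqrt_pos.2 hp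
  have hs2 : 0 < Real.sqrt (q * (Y - a)) := Real.sqrt_pos.2 hq
  have houter : (fun Y' => deriv (fun X' => Real.sqrt ((p * (X' - a)) * (q * (Y' - a)))) X)
      = fun Y' => p / (2 * Real.sqrt (p * (X - a))) * Real.sqrt (q * (Y' - a)) :=
    funext fun Y' => aux_derivX a p X _ hp
  have hmix : deriv (fun Y' => p / (2 * Real.sqrt (p * (X - a))) * Real.sqrt (q * (Y' - a))) Y
      = p / (2 * Real.sqrt (p * (X - a))) * (q / (2 * Real.sqrt (q * (Y - a)))) :=
    ((aux_sqrt_hasDerivAt q a Y hq).const_mul _).deriv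
  rw [houter, hmix, aux_derivX a p X _ hp, aux_derivY a q Y _ hp hq]
  have e1 : Real.sqrt (p * (X - a)) ^ 2 = p * (X - a) := Real.sq_sqrt hp.le
  have e2 : Real.sqrt (q * (Y - a)) ^ 2 = q * (Y - a) := Real.sq_sqrt hq.le
  have hxy : X - Y ≠ 0 := sub_ne_zero.2 hXY.ne'
  field_simp
  linear_combination p * e2

/-- Each component of the classical map `e₃` on the rectangle `λ₁ < Y < λ₂ < X < λ₃`
satisfies the Euler equation `e_{XY} + (1/2)/(X-Y)·e_X - (1/2)/(X-Y)·e_Y = 0`. -/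
theorem stmt_14 (l1 l2 l3 : ℝ) (h12 : l1 < l2) (h23 : l2 < l3)
    (u v w : ℝ → ℝ → ℝ)
    (hu : ∀ X Y, u X Y = Real.sqrt ((X - l1) * (Y - l1) / ((l2 - l1) * (l3 - l1))))
    (hv : ∀ X Y, v X Y = Real.sqrt ((X - l2) * (l2 - Y) / ((l2 - l1) * (l3 - l2))))
    (hw : ∀ X Y, w X Y = Real.sqrt ((l3 - X) * (l3 - Y) / ((l3 - l1) * (l3 - l2))))
    (X Y : ℝ) (hY1 : l1 < Y) (hY2 : Y < l2) (hX1 : l2 < X) (hX2 : X < l3) :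
    (deriv (fun Y' => deriv (fun X' => u X' Y') X) Y
      + ((1 : ℝ)/2) / (X - Y) * deriv (fun X' => u X' Y) X
      - ((1 : ℝ)/2) / (X - Y) * deriv (fun Y' => u X Y') Y = 0) ∧
    (deriv (fun Y' => deriv (fun X' => v X' Y') X) Y
      + ((1 : ℝ)/2) / (X - Y) * deriv (fun X' => v X' Y) X
      - ((1 : ℝ)/2) / (X - Y) * deriv (fun Y' => v X Y') Y = 0) ∧
    (deriv (fun Y' => deriv (fun X' => w X' Y') X) Y
      + ((1 : ℝ)/2) / (X - Y) * deriv (fun X' => w X' Y) X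
      - ((1 : ℝ)/2) / (X - Y) * deriv (fun Y' => w X Y') Y = 0) := by
  have d21 : (0:ℝ) < l2 - l1 := by linarith
  have d31 : (0:ℝ) < l3 - l1 := by linarith
  have d32 : (0:ℝ) < l3 - l2 := by linarith
  have hYX : Y < X := by linarith
  refine ⟨?_, ?_, ?_⟩
  · have hu' : ∀ X' Y', u X' Y'
        = Real.sqrt ((1/(l2-l1) * (X' - l1)) * (1/(l3-l1) * (Y' - l1))) := by
      intro X' Y'; rw [hu]; congr 1
      field_simp
    simp only [hu']
    exact key l1 (1/(l2-l1)) (1/(l3-l1)) X Y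
      (mul_pos (one_div_pos.2 d21) (by linarith))
      (mul_pos (one_div_pos.2 d31) (by linarith)) hYX
  · have hv' : ∀ X' Y', v X' Y'
        = Real.sqrt ((1/(l3-l2) * (X' - l2)) * (-(1/(l2-l1)) * (Y' - l2))) := by
      intro X' Y'; rw [hv]; congr 1
      field_simp; ring
    simp only [hv']
    exact key l2 (1/(l3-l2)) (-(1/(l2-l1))) X Y
      (mul_pos (one_div_pos.2 d32) (by linarith))
      (by rw [show -(1/(l2-l1))*(Y-l2) = 1/(l2-l1)*(l2-Y) by ring]
          exact mul_pos (one_div_pos.2 d21) (by linarith)) hYX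
  · have hw' : ∀ X' Y', w X' Y'
        = Real.sqrt ((-(1/(l3-l1)) * (X' - l3)) * (-(1/(l3-l2)) * (Y' - l3))) := by
      intro X' Y'; rw [hw]; congr 1
      field_simp; ring
    simp only [hw']
    exact key l3 (-(1/(l3-l1))) (-(1/(l3-l2))) X Y
      (by rw [show -(1/(l3-l1))*(X-l3) = 1/(l3-l1)*(l3-X) by ring]
          exact mul_pos (one_div_pos.2 d31) (by linarith))
      (by rw [show -(1/(l3-l2))*(Y-l3) = 1/(l3-l2)*(l3-Y) by ring]
          exact mul_pos (one_div_pos.2 d32) (by linarith)) hYX
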